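/- Let Δ be a facet complex and F, G ∈ Δ. If F is a leaf of Δ \ {G} but not a leaf of Δ, then F and G are strong neighbors in Δ. -/
import Mathlib


variable {V : Type*} [DecidableEq V]

/-- A facet complex: no facet contains another. -/
def IsFacetComplex (Δ : Finset (Finset V)) : Prop :=
  ∀ F ∈ Δ, ∀ G ∈ Δ, F ⊆ G → F = G

/-- `F` is a leaf of `Δ`. -/
def IsLeaf (Δ : Finset (Finset V)) (F : Finset V) : Prop :=
  F ∈ Δ ∧ (Δ = {F} ∨ ∃ G ∈ Δ.erase F, ∀ H ∈ Δ.erase F, H ∩ F ⊆ G ∩ F)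

/-- `Δ` is a forest: every nonempty subset has a leaf. -/
def IsForest (Δ : Finset (Finset V)) : Prop :=
  ∀ Γ ⊆ Δ, Γ.Nonempty → ∃ F, IsLeaf Γ F

/-- `Δ` is connected: any two facets are joined by a path of consecutively
intersecting facets. -/
def FCConnected (Δ : Finset (Finset V)) : Prop :=
  ∀ F ∈ Δ, ∀ G ∈ Δ,
    Relation.ReflTransGen (fun A B => A ∈ Δ ∧ B ∈ Δ ∧ (A ∩ B).Nonempty) F G

/-- A (simplicial) tree is a connected forest. -/
def IsTree (Δ : Finset (Finset V)) : Prop := FCConnected Δ ∧ IsForest Δ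

/-- A cycle: a nonempty facet complex with no leaf, every nonempty proper
subset of which has a leaf. -/
def IsCycle (Δ : Finset (Finset V)) : Prop :=
  Δ.Nonempty ∧ (¬ ∃ F, IsLeaf Δ F) ∧ ∀ Γ ⊂ Δ, Γ.Nonempty → ∃ F, IsLeaf Γ F

/-- Strong neighbors in `Δ`. -/
def StrongNeighbor (Δ : Finset (Finset V)) (F G : Finset V) : Prop :=
  F ∈ Δ ∧ G ∈ Δ ∧ F ≠ G ∧ ∀ H ∈ Δ, F ∩ G ⊆ H → H = F ∨ H = G

theorem leaf_of_erase_strong_neighbor (Δ : Finset (Finset V))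
    (hΔ : IsFacetComplex Δ) (F G : Finset V) (hF : F ∈ Δ) (hG : G ∈ Δ)
    (h1 : IsLeaf (Δ.erase G) F) (h2 : ¬ IsLeaf Δ F) :
    StrongNeighbor Δ F G := by
  obtain ⟨hFmem, hcase⟩ := h1
  have hFG : F ≠ G := (Finset.mem_erase.mp hFmem).1
  refine ⟨hF, hG, hFG, ?_⟩
  rcases hcase with hsing | ⟨G', hG'mem, hG'joint⟩
  · -- Δ.erase G = {F}, so Δ ⊆ {F, G}
    intro H hH _
    by_cases hHG : H = G
    · exact Or.inr hHG
    · have : H ∈ Δ.erase G := Finset.mem_erase.mpr ⟨hHG, hH⟩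
      rw [hsing, Finset.mem_singleton] at this
      exact Or.inl this
  · -- G' is a joint of Δ.erase G at F; since F is not a leaf of Δ, G must
    -- violate the joint condition, i.e. ¬ (G ∩ F ⊆ G' ∩ F).
    have hG'F : G' ∈ Δ.erase F := by
      have := Finset.mem_erase.mp hG'mem
      exact Finset.mem_erase.mpr ⟨this.1, (Finset.mem_erase.mp this.2).2⟩
    have hnot : ¬ (G ∩ F ⊆ G' ∩ F) := by
      intro hGsub
      apply h2
      refine ⟨hF, Or.inr ⟨G', hG'F, ?_⟩⟩
      intro H hH
      by_cases hHG : H = G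
      · subst hHG; exact hGsub
      · have hHmem := Finset.mem_erase.mp hH
        exact hG'joint H (Finset.mem_erase.mpr ⟨hHmem.1,
          Finset.mem_erase.mpr ⟨hHG, hHmem.2⟩⟩)
    intro H hH hsub
    by_cases hHF : H = F
    · exact Or.inl hHF
    by_cases hHG : H = G
    · exact Or.inr hHG
    exfalso
    apply hnot
    have hH' : H ∈ (Δ.erase G).erase F :=
      Finset.mem_erase.mpr ⟨hHF, Finset.mem_erase.mpr ⟨hHG, hH⟩⟩
    calc G ∩ F ⊆ H ∩ F := by
          intro x hx
          exact Finset.mem_inter.mpr ⟨hsub (Finset.mem_inter.mpr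
            ⟨(Finset.mem_inter.mp hx).2, (Finset.mem_inter.mp hx).1⟩),
            (Finset.mem_inter.mp hx).2⟩
      _ ⊆ G' ∩ F := hG'joint H hH'
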